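/- For integer m ≥ 2 and n ≥ 1, let 0 < x_{⌊n/2⌋,n}(t,λ) < ⋯ < x_{2,n}(t,λ) < x_{1,n}(t,λ) denote the positive zeros of the monic polynomial P_n(x;t,λ) orthogonal with respect to the generalised higher order Freud weight |x|^{2λ+1} exp(t x² − x^{2m}). Then for each fixed ν ∈ {1, …, ⌊n/2⌋}, the zero x_{ν,n}(t,λ) is strictly increasing in λ (for λ > −1 with t fixed) and strictly increasing in t (for t ∈ ℝ with λ > −1 fixed): if λ₁ < λ₂ then x_{ν,n}(t,λ₁) < x_{ν,n}(t,λ₂), and if t₁ < t₂ then x_{ν,n}(t₁,λ) < x_{ν,n}(t₂,λ). -/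

import Mathlib

open MeasureTheory Real Polynomial

/-- The generalised higher order Freud weight `ω(x;t,λ) = |x|^{2λ+1} exp(t x² − x^{2m})`. -/
noncomputable def freudWeight (m : ℕ) (lam t x : ℝ) : ℝ :=
  |x| ^ (2 * lam + 1) * Real.exp (t * x ^ 2 - x ^ (2 * m))

/-- `z` is the `ν`-th largest positive zero of the polynomial `p`: it is a positive root of `p`
and exactly `ν − 1` distinct roots of `p` exceed it. -/
def IsNthLargestPosZero (p : Polynomial ℝ) (ν : ℕ) (z : ℝ) : Prop :=
  0 < z ∧ p.IsRoot z ∧ (p.roots.toFinset.filter (fun y => z < y)).card = ν - 1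

open Set

lemma freud_exp_bound (t : ℝ) {m : ℕ} (hm : 2 ≤ m) (x : ℝ) :
    t * x ^ 2 - x ^ (2 * m) ≤ (|t| + 1) ^ 2 + (-1) * x ^ 2 := by
  have h1 : t * x ^ 2 ≤ |t| * x ^ 2 := by
    have := le_abs_self t
    nlinarith [sq_nonneg x]
  have key : (|t| + 1) * x ^ 2 ≤ (x ^ 2) ^ m + (|t| + 1) ^ 2 := by
    rcases le_or_gt (x ^ 2) (|t| + 1) with h | h
    · nlinarith [abs_nonneg t, sq_nonneg x, pow_nonneg (sq_nonneg x) m]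
    · have h1 : (1:ℝ) ≤ x ^ 2 := by nlinarith [abs_nonneg t]
      have h2 : (x ^ 2) ^ 2 ≤ (x ^ 2) ^ m := pow_le_pow_right₀ h1 hm
      nlinarith [abs_nonneg t]
  have : x ^ (2 * m) = (x ^ 2) ^ m := by rw [pow_mul]
  nlinarith [key]

lemma integrable_core {a : ℝ} (ha : -1 < a) (t : ℝ) {m : ℕ} (hm : 2 ≤ m) :
    Integrable (fun x : ℝ => |x| ^ a * Real.exp (t * x ^ 2 - x ^ (2 * m))) := by
  set f : ℝ → ℝ := fun x => |x| ^ a * Real.exp (t * x ^ 2 - x ^ (2 * m)) with hf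
  have hmeas : Measurable f := by
    apply Measurable.mul
    · exact (measurable_id.abs).pow_const a
    · exact Real.measurable_exp.comp (by fun_prop)
  have hIoi : IntegrableOn f (Ioi 0) := by
    have hg : IntegrableOn (fun x : ℝ => Real.exp ((|t|+1)^2) * (x ^ a * Real.exp (-1 * x ^ 2)))
        (Ioi 0) := by
      exact (integrableOn_rpow_mul_exp_neg_mul_sq one_pos ha).const_mul _
    refine Integrable.mono' hg (hmeas.aestronglyMeasurable.restrict) ?_
    filter_upwards [ae_restrict_mem measurableSet_Ioi] with x hx
    have hx0 : (0:ℝ) < x := hx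
    have h1 : |x| ^ a = x ^ a := by rw [abs_of_pos hx0]
    have h2 : Real.exp (t * x ^ 2 - x ^ (2*m)) ≤ Real.exp ((|t|+1)^2) * Real.exp (-1 * x ^ 2) := by
      rw [← Real.exp_add]
      exact Real.exp_le_exp.mpr (freud_exp_bound t hm x)
    have h3 : (0:ℝ) ≤ x ^ a := Real.rpow_nonneg hx0.le a
    have habs : |f x| = x ^ a * Real.exp (t * x ^ 2 - x ^ (2*m)) := by
      rw [hf]; simp only []
      rw [h1, abs_of_nonneg (by positivity)]
    rw [Real.norm_eq_abs, habs, mul_comm (Real.exp ((|t|+1)^2))]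
    calc x ^ a * Real.exp (t * x ^ 2 - x ^ (2*m))
        ≤ x ^ a * (Real.exp ((|t|+1)^2) * Real.exp (-1 * x ^ 2)) := by
          exact mul_le_mul_of_nonneg_left h2 h3
      _ = x ^ a * Real.exp (-1 * x ^ 2) * Real.exp ((|t|+1)^2) := by ring
  have heven : ∀ x : ℝ, f (-x) = f x := by
    intro x
    simp only [hf, abs_neg]
    rw [Even.neg_pow even_two, Even.neg_pow (even_two_mul m)]
  have hIic : IntegrableOn f (Iic 0) := by
    rw [← Measure.map_neg_eq_self (volume : Measure ℝ)]
    have memb : MeasurableEmbedding fun x : ℝ => -x :=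
      (Homeomorph.neg ℝ).measurableEmbedding
    rw [memb.integrableOn_map_iff]
    have : (fun x : ℝ => -x) ⁻¹' (Iic 0) = Ici 0 := by
      rw [show (fun x : ℝ => -x) = Neg.neg from rfl, neg_preimage, neg_Iic, neg_zero]
    rw [this]
    have : f ∘ (fun x : ℝ => -x) = f := by funext x; exact heven x
    rw [this]
    rwa [integrableOn_Ici_iff_integrableOn_Ioi]
  have : IntegrableOn f (Iic 0 ∪ Ioi 0) := hIic.union hIoi
  rwa [Set.Iic_union_Ioi, integrableOn_univ] at this


structure NiceWeight (w : ℝ → ℝ) : Prop where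
  int : ∀ f : Polynomial ℝ, Integrable (fun x => f.eval x * w x)
  nonneg : ∀ x, 0 ≤ w x
  pos : ∀ x, x ≠ 0 → 0 < w x
  even : ∀ x, w (-x) = w x

lemma integrable_monomial_mul_freud {lam : ℝ} (hlam : -1 < lam) (t : ℝ) {m : ℕ} (hm : 2 ≤ m)
    (i : ℕ) : Integrable (fun x : ℝ => x ^ i * freudWeight m lam t x) := by
  have ha : (-1:ℝ) < 2 * lam + 1 + i := by
    have : (0:ℝ) ≤ i := Nat.cast_nonneg i
    linarith
  refine Integrable.mono' (integrable_core ha t hm) ?_ ?_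
  · apply Measurable.aestronglyMeasurable
    apply Measurable.mul (measurable_id.pow_const i)
    unfold freudWeight
    exact ((measurable_id.abs).pow_const _).mul (Real.measurable_exp.comp (by fun_prop))
  · refine Filter.Eventually.of_forall fun x => ?_
    rw [Real.norm_eq_abs]
    unfold freudWeight
    rcases eq_or_ne x 0 with rfl | hx
    · rcases Nat.eq_zero_or_pos i with rfl | hi
      · rw [pow_zero, one_mul, Nat.cast_zero, add_zero, abs_of_nonneg (by positivity)]
      · have h1 : (0:ℝ) ^ i = 0 := zero_pow hi.ne'
        have h2 : (0:ℝ) < 2 * lam + 1 + i := by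
          have : (1:ℝ) ≤ i := by exact_mod_cast hi
          linarith
        simp only [h1, abs_zero]
        rw [Real.zero_rpow h2.ne']
        simp
    · have hax : (0:ℝ) < |x| := abs_pos.mpr hx
      have h1 : |x ^ i * (|x| ^ (2*lam+1) * Real.exp (t*x^2 - x^(2*m)))|
          = |x| ^ (i:ℝ) * (|x| ^ (2*lam+1) * Real.exp (t*x^2 - x^(2*m))) := by
        rw [abs_mul, abs_pow, abs_of_nonneg (mul_nonneg (Real.rpow_nonneg (abs_nonneg x) _)
          (Real.exp_nonneg _)), Real.rpow_natCast]
      rw [h1, ← mul_assoc, ← Real.rpow_add hax,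
        show (i:ℝ)+(2*lam+1) = 2*lam+1+(i:ℝ) from by ring]
  
lemma niceWeight_freud {lam : ℝ} (hlam : -1 < lam) (t : ℝ) {m : ℕ} (hm : 2 ≤ m) :
    NiceWeight (freudWeight m lam t) := by
  constructor
  · intro f
    have : (fun x => f.eval x * freudWeight m lam t x)
        = fun x => ∑ i ∈ Finset.range (f.natDegree + 1),
            f.coeff i * (x ^ i * freudWeight m lam t x) := by
      funext x
      rw [eval_eq_sum_range, Finset.sum_mul]
      simp [mul_assoc]
    rw [this]
    exact integrable_finset_sum _ fun i _ =>
      ((integrable_monomial_mul_freud hlam t hm i).const_mul _)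
  · intro x
    exact mul_nonneg (Real.rpow_nonneg (abs_nonneg x) _) (Real.exp_nonneg _)
  · intro x hx
    exact mul_pos (Real.rpow_pos_of_pos (abs_pos.mpr hx) _) (Real.exp_pos _)
  · intro x
    unfold freudWeight
    rw [abs_neg, Even.neg_pow even_two, Even.neg_pow (even_two_mul m)]

lemma integral_poly_w_pos {w : ℝ → ℝ} (hw : NiceWeight w) {f : Polynomial ℝ} (hf : f ≠ 0)
    (hnn : ∀ x, 0 ≤ f.eval x) : 0 < ∫ x : ℝ, f.eval x * w x := by
  have hint := hw.int f
  have hnn' : ∀ x, 0 ≤ f.eval x * w x := fun x => mul_nonneg (hnn x) (hw.nonneg x)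
  rw [integral_pos_iff_support_of_nonneg_ae (Filter.Eventually.of_forall hnn') hint]
  obtain ⟨M, hM⟩ := (f.roots.toFinset.finite_toSet).bddAbove
  set M' := max M 0 with hM'
  have hsub : Ioi M' ⊆ Function.support fun x => f.eval x * w x := by
    intro x hx
    have hx0 : (0:ℝ) < x := lt_of_le_of_lt (le_max_right M 0) hx
    have hroot : f.eval x ≠ 0 := by
      intro h
      have : x ∈ f.roots.toFinset := by
        rw [Multiset.mem_toFinset, mem_roots hf]
        exact h
      have := hM (Finset.mem_coe.mpr this)
      have : x ≤ M' := le_trans this (le_max_left M 0)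
      exact absurd hx (not_lt.mpr this)
    exact (mul_pos (lt_of_le_of_ne (hnn x) (Ne.symm hroot)) (hw.pos x hx0.ne')).ne'
  calc (0:ENNReal) < volume (Ioi M') := by rw [Real.volume_Ioi]; exact ENNReal.zero_lt_top
    _ ≤ _ := measure_mono hsub

lemma integral_sq_w_pos {w : ℝ → ℝ} (hw : NiceWeight w) {f : Polynomial ℝ} (hf : f ≠ 0) :
    0 < ∫ x : ℝ, f.eval x * f.eval x * w x := by
  have := integral_poly_w_pos hw (mul_ne_zero hf hf) (f := f * f)
    (fun x => by rw [eval_mul]; exact mul_self_nonneg _)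
  simpa [eval_mul] using this


lemma integrable_ip {w : ℝ → ℝ} (hw : NiceWeight w) (f g : Polynomial ℝ) :
    Integrable (fun x => f.eval x * g.eval x * w x) := by
  have := hw.int (f * g)
  apply this.congr
  refine Filter.Eventually.of_forall fun x => ?_
  simp [eval_mul, mul_assoc]

lemma orth_all {w : ℝ → ℝ} (hw : NiceWeight w) {P : ℕ → Polynomial ℝ}
    (hmono : ∀ j, (P j).Monic) (hdeg : ∀ j, (P j).natDegree = j)
    (horth : ∀ j k, j ≠ k → ∫ x : ℝ, (P j).eval x * (P k).eval x * w x = 0)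
    {n : ℕ} :
    ∀ h : Polynomial ℝ, h.natDegree < n → ∫ x : ℝ, (P n).eval x * h.eval x * w x = 0 := by
  suffices H : ∀ d : ℕ, ∀ h : Polynomial ℝ, h.natDegree < n → h.natDegree ≤ d →
      ∫ x : ℝ, (P n).eval x * h.eval x * w x = 0 by
    intro h hh; exact H h.natDegree h hh le_rfl
  intro d
  induction d using Nat.strong_induction_on with
  | _ d IH =>
    intro h hh hd
    by_cases h0 : h = 0
    · subst h0; simp
    set e := h.natDegree with he
    set c := h.coeff e with hc
    set r := h - C c * P e with hr
    have hPe : (P e).natDegree = e := hdeg e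
    have hcoeffr : r.coeff e = 0 := by
      rw [hr]
      simp only [coeff_sub, coeff_C_mul]
      have : (P e).coeff e = 1 := by
        have := (hmono e).coeff_natDegree
        rwa [hPe] at this
      rw [this, mul_one, hc, sub_self]
    have hrdeg : r.natDegree ≤ e := by
      refine le_trans (natDegree_sub_le _ _) ?_
      simp only [max_le_iff]
      exact ⟨le_rfl, le_trans (natDegree_C_mul_le _ _) (le_of_eq hPe)⟩
    have hrlt : r = 0 ∨ r.natDegree < e := by
      by_cases hr0 : r = 0
      · exact Or.inl hr0
      · right
        rcases lt_or_eq_of_le hrdeg with h | h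
        · exact h
        · exfalso
          have : r.leadingCoeff = 0 := by rw [leadingCoeff, h, hcoeffr]
          exact hr0 (leadingCoeff_eq_zero.mp this)
    have hsplit : (fun x => (P n).eval x * h.eval x * w x)
        = fun x => (P n).eval x * r.eval x * w x + c * ((P n).eval x * (P e).eval x * w x) := by
      funext x
      have : h = r + C c * P e := by rw [hr]; ring
      rw [this]
      simp only [eval_add, eval_mul, eval_C]
      ring
    rw [hsplit, integral_add (integrable_ip hw _ _) ((integrable_ip hw _ _).const_mul c),
      integral_const_mul, horth n e (by omega), mul_zero, add_zero]
    rcases hrlt with hr0 | hlt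
    · rw [hr0]; simp
    · exact IH r.natDegree (by omega) r (by omega) le_rfl

lemma integral_comp_neg_real (F : ℝ → ℝ) : ∫ x : ℝ, F (-x) = ∫ x : ℝ, F x :=
  (Measure.measurePreserving_neg _).integral_comp (Homeomorph.neg ℝ).measurableEmbedding F

lemma parity_self {w : ℝ → ℝ} (hw : NiceWeight w) {n : ℕ} {p : Polynomial ℝ}
    (hp : p.Monic) (hd : p.natDegree = n)
    (horthp : ∀ h : Polynomial ℝ, h.natDegree < n → ∫ x : ℝ, p.eval x * h.eval x * w x = 0) :
    p.comp (-X) = C ((-1:ℝ)^n) * p := by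
  set q := C ((-1:ℝ)^n) * p.comp (-X) with hq
  have hcne : ((-1:ℝ)^n) ≠ 0 := by
    intro h; simpa using congrArg abs h
  have hXdeg : (-X : Polynomial ℝ).natDegree = 1 := by
    rw [natDegree_neg, natDegree_X]
  have hcompdeg : (p.comp (-X)).natDegree = n := by
    rw [natDegree_comp, hXdeg, mul_one, hd]
  have hlc : (p.comp (-X)).leadingCoeff = (-1:ℝ)^n := by
    rw [leadingCoeff_comp (by rw [hXdeg]; norm_num), hp.leadingCoeff, one_mul,
      leadingCoeff_neg, leadingCoeff_X, hd]
  have hqmonic : q.Monic := by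
    unfold Monic
    rw [hq, leadingCoeff_mul, leadingCoeff_C, hlc, ← pow_add]
    exact Even.neg_one_pow ⟨n, rfl⟩
  have hqdeg : q.natDegree = n := by
    rw [hq, natDegree_C_mul hcne, hcompdeg]
  have evalq : ∀ x : ℝ, q.eval x = (-1:ℝ)^n * p.eval (-x) := by
    intro x
    rw [hq, eval_mul, eval_C, eval_comp]
    simp
  have hqorth : ∀ h : Polynomial ℝ, h.natDegree < n →
      ∫ x : ℝ, q.eval x * h.eval x * w x = 0 := by
    intro h hh
    set F : ℝ → ℝ := fun y => p.eval y * (h.comp (-X)).eval y * w y with hF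
    have key : ∀ x : ℝ, q.eval x * h.eval x * w x = ((-1:ℝ)^n) * F (-x) := by
      intro x
      rw [hF]
      simp only [eval_comp, eval_neg, eval_X, neg_neg, hw.even, evalq]
      ring
    calc ∫ x : ℝ, q.eval x * h.eval x * w x = ∫ x : ℝ, ((-1:ℝ)^n) * F (-x) := by
          congr 1; funext x; exact key x
      _ = ((-1:ℝ)^n) * ∫ x : ℝ, F (-x) := integral_const_mul _ _
      _ = ((-1:ℝ)^n) * ∫ x : ℝ, F x := by rw [integral_comp_neg_real]
      _ = 0 := by
          rw [horthp (h.comp (-X)) (by rw [natDegree_comp, hXdeg, mul_one]; exact hh), mul_zero]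
  by_cases hqp : q = p
  · have : C ((-1:ℝ)^n) * q = p.comp (-X) := by
      rw [hq, ← mul_assoc, ← C_mul, ← pow_add, Even.neg_one_pow ⟨n, rfl⟩, C_1, one_mul]
    rw [hqp] at this
    exact this.symm
  · exfalso
    set s := q - p with hs
    have hs0 : s ≠ 0 := sub_ne_zero.mpr hqp
    have hdegs : s.natDegree < n := by
      have h1 : q.degree = p.degree := by
        rw [degree_eq_natDegree hqmonic.ne_zero, degree_eq_natDegree hp.ne_zero, hqdeg, hd]
      have h2 : s.degree < q.degree := degree_sub_lt h1 hqmonic.ne_zero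
        (by rw [hqmonic.leadingCoeff, hp.leadingCoeff])
      have h3 : s.degree < (n : WithBot ℕ) := by
        rw [degree_eq_natDegree hqmonic.ne_zero, hqdeg] at h2; exact h2
      exact (natDegree_lt_iff_degree_lt hs0).mpr h3
    have horths : ∫ x : ℝ, s.eval x * s.eval x * w x = 0 := by
      have e1 : (fun x : ℝ => s.eval x * s.eval x * w x)
          = fun x => q.eval x * s.eval x * w x - p.eval x * s.eval x * w x := by
        funext x; rw [hs]; simp only [eval_sub]; ring
      rw [e1, integral_sub (integrable_ip hw _ _) (integrable_ip hw _ _),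
        hqorth s hdegs, horthp s hdegs, sub_zero]
    exact absurd horths (ne_of_gt (integral_sq_w_pos hw hs0))


lemma monic_pos_of_no_roots {v : Polynomial ℝ} (hv : v.Monic) (hr : v.roots = 0) :
    ∀ x, 0 < v.eval x := by
  have hne : ∀ x : ℝ, v.eval x ≠ 0 := by
    intro x hx
    have : x ∈ v.roots := by
      rw [mem_roots hv.ne_zero]
      exact hx
    rw [hr] at this
    simp at this
  rcases Nat.eq_zero_or_pos v.natDegree with h0 | hpos
  · obtain ⟨a, ha⟩ := natDegree_eq_zero.mp h0
    have : a = 1 := by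
      have := hv.leadingCoeff
      rw [← ha] at this
      simpa using this
    intro x
    rw [← ha, this]
    simp
  · intro x
    by_contra hle
    have hlt : v.eval x < 0 := lt_of_le_of_ne (not_lt.mp hle) (hne x)
    have htend : Filter.Tendsto (fun y => v.eval y) Filter.atTop Filter.atTop := by
      apply Polynomial.tendsto_atTop_of_leadingCoeff_nonneg
      · rwa [← natDegree_pos_iff_degree_pos]
      · rw [hv.leadingCoeff]; norm_num
    obtain ⟨y, hy⟩ := (htend.eventually_ge_atTop 1).and (Filter.eventually_ge_atTop x)
      |>.exists
    have hxy : x ≤ y := hy.2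
    have : (0:ℝ) ∈ Set.Icc (v.eval x) (v.eval y) := ⟨hlt.le, by linarith [hy.1]⟩
    obtain ⟨z, _, hz⟩ := intermediate_value_Icc hxy (v.continuousOn) this
    exact hne z hz

lemma root_structure {w : ℝ → ℝ} (hw : NiceWeight w) {n : ℕ} {p : Polynomial ℝ}
    (hp : p.Monic) (hd : p.natDegree = n)
    (horthp : ∀ h : Polynomial ℝ, h.natDegree < n → ∫ x : ℝ, p.eval x * h.eval x * w x = 0) :
    p.roots.toFinset.card = n ∧
    (∀ r ∈ p.roots.toFinset, -r ∈ p.roots.toFinset) ∧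
    (p.roots.toFinset.filter (fun r => 0 < r)).card = n / 2 := by
  classical
  set D := p.roots.toFinset with hD
  -- symmetry first
  have hsym : ∀ r ∈ D, -r ∈ D := by
    intro r hr
    have hroot : p.eval r = 0 := by
      rw [hD, Multiset.mem_toFinset, mem_roots hp.ne_zero] at hr
      exact hr
    have hcomp := parity_self hw hp hd horthp
    have : p.eval (-r) = ((-1:ℝ)^n) * p.eval r := by
      have := congrArg (eval r) hcomp
      rwa [eval_comp, eval_neg, eval_X, eval_mul, eval_C] at this
    rw [hD, Multiset.mem_toFinset, mem_roots hp.ne_zero]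
    rw [IsRoot, this, hroot, mul_zero]
  -- card = n
  have hcard : D.card = n := by
    set T := D.filter (fun r => Odd (p.roots.count r)) with hT
    set q := ∏ r ∈ T, (X - C r) with hq
    have hqmonic : q.Monic := monic_prod_of_monic _ _ fun r _ => monic_X_sub_C r
    have hqdeg : q.natDegree = T.card := by
      rw [hq, natDegree_prod_of_monic _ _ fun r _ => monic_X_sub_C r]
      simp [natDegree_X_sub_C]
    obtain ⟨v, hv⟩ := prod_multiset_X_sub_C_dvd p
    have hprodmonic : (Multiset.map (fun a => X - C a) p.roots).prod.Monic :=
      monic_multiset_prod_of_monic _ _ fun a _ => monic_X_sub_C a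
    have hvmonic : v.Monic := by
      apply hprodmonic.of_mul_monic_left
      rw [← hv]; exact hp
    have hvroots : v.roots = 0 := by
      have h1 : p.roots = p.roots + v.roots := by
        conv_lhs => rw [hv]
        rw [roots_mul (by rw [← hv]; exact hp.ne_zero), roots_multiset_prod_X_sub_C]
      have h2 : p.roots + 0 = p.roots + v.roots := by simpa using h1
      exact (add_left_cancel h2).symm
    have hvpos := monic_pos_of_no_roots hvmonic hvroots
    have hkey : ∀ x : ℝ, 0 ≤ (p * q).eval x := by
      intro x
      have e1 : p.eval x = (∏ r ∈ D, (x - r) ^ (p.roots.count r)) * v.eval x := by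
        conv_lhs => rw [hv]
        rw [eval_mul]
        congr 1
        rw [eval_multiset_prod, Multiset.map_map]
        have : (Multiset.map (fun a => eval x (X - C a)) p.roots)
            = Multiset.map (fun a => x - a) p.roots := by
          apply Multiset.map_congr rfl
          intro a _
          simp
        rw [Function.comp_def, this, Finset.prod_multiset_map_count]
      have e2 : q.eval x = ∏ r ∈ D, (if Odd (p.roots.count r) then (x - r) else 1) := by
        rw [hq, eval_prod, hT, Finset.prod_filter]
        congr 1
        funext r
        split <;> simp
      rw [eval_mul, e1, e2]
      have : (∏ r ∈ D, (x - r) ^ (p.roots.count r)) *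
          (∏ r ∈ D, (if Odd (p.roots.count r) then (x - r) else 1))
          = ∏ r ∈ D, (x - r) ^ (p.roots.count r + if Odd (p.roots.count r) then 1 else 0) := by
        rw [← Finset.prod_mul_distrib]
        apply Finset.prod_congr rfl
        intro r _
        rw [pow_add]
        congr 1
        split <;> simp
      have hnn : 0 ≤ ∏ r ∈ D, (x - r) ^ (p.roots.count r + if Odd (p.roots.count r) then 1 else 0) := by
        apply Finset.prod_nonneg
        intro r _
        apply Even.pow_nonneg
        rcases Nat.even_or_odd (p.roots.count r) with he | ho
        · rw [if_neg (by simpa [Nat.not_odd_iff_even] using he), add_zero]; exact he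
        · rw [if_pos ho]
          exact ho.add_one
      calc (0:ℝ) ≤ (∏ r ∈ D, (x - r) ^ (p.roots.count r + if Odd (p.roots.count r) then 1 else 0))
            * v.eval x := mul_nonneg hnn (hvpos x).le
        _ = _ := by rw [← this]; ring
    have hTn : n ≤ T.card := by
      by_contra hlt
      push_neg at hlt
      have h0 : 0 < ∫ x : ℝ, (p * q).eval x * w x :=
        integral_poly_w_pos hw (mul_ne_zero hp.ne_zero hqmonic.ne_zero) hkey
      have h1 : ∫ x : ℝ, (p * q).eval x * w x = ∫ x : ℝ, p.eval x * q.eval x * w x := by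
        congr 1; funext x; rw [eval_mul, mul_assoc]
      rw [h1, horthp q (by omega)] at h0
      exact lt_irrefl 0 h0
    have c1 : T.card ≤ D.card := Finset.card_filter_le _ _
    have c2 : D.card ≤ Multiset.card p.roots := Multiset.toFinset_card_le _
    have c3 : Multiset.card p.roots ≤ n := by
      rw [← hd]; exact card_roots' p
    omega
  refine ⟨hcard, hsym, ?_⟩
  -- counting positive roots
  have hq1 : (D.filter (fun r => 0 < r)).card + (D.filter (fun r => ¬ 0 < r)).card = D.card :=
    Finset.card_filter_add_card_filter_not _
  have hq2 : ((D.filter (fun r => ¬ 0 < r)).filter (fun r => r < 0)).card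
      + ((D.filter (fun r => ¬ 0 < r)).filter (fun r => ¬ r < 0)).card
      = (D.filter (fun r => ¬ 0 < r)).card :=
    Finset.card_filter_add_card_filter_not _
  have hneg : (D.filter (fun r => ¬ 0 < r)).filter (fun r => r < 0)
      = (D.filter (fun r => 0 < r)).image (fun r => -r) := by
    ext r
    simp only [Finset.mem_filter, Finset.mem_image]
    constructor
    · rintro ⟨⟨hrD, -⟩, hrneg⟩
      exact ⟨-r, ⟨hsym r hrD, by linarith⟩, by ring⟩
    · rintro ⟨s, ⟨hsD, hspos⟩, rfl⟩
      exact ⟨⟨hsym s hsD, by linarith⟩, by linarith⟩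
  have hnegcard : ((D.filter (fun r => ¬ 0 < r)).filter (fun r => r < 0)).card
      = (D.filter (fun r => 0 < r)).card := by
    rw [hneg, Finset.card_image_of_injective _ neg_injective]
  have hzero : ((D.filter (fun r => ¬ 0 < r)).filter (fun r => ¬ r < 0)).card ≤ 1 := by
    apply Finset.card_le_one.mpr
    intro a ha b hb
    simp only [Finset.mem_filter] at ha hb
    have : a = 0 := le_antisymm (not_lt.mp ha.1.2) (not_lt.mp ha.2)
    have hb0 : b = 0 := le_antisymm (not_lt.mp hb.1.2) (not_lt.mp hb.2)
    rw [this, hb0]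
  omega


noncomputable def IPW (w : ℝ → ℝ) (h : Polynomial ℝ) : ℝ := ∫ x : ℝ, h.eval x * w x

lemma IPW_add {w : ℝ → ℝ} (hw : NiceWeight w) (h₁ h₂ : Polynomial ℝ) :
    IPW w (h₁ + h₂) = IPW w h₁ + IPW w h₂ := by
  unfold IPW
  rw [← integral_add (hw.int h₁) (hw.int h₂)]
  congr 1; funext x; rw [eval_add]; ring

lemma IPW_Cmul {w : ℝ → ℝ} (c : ℝ) (h : Polynomial ℝ) :
    IPW w (C c * h) = c * IPW w h := by
  unfold IPW
  rw [← integral_const_mul]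
  congr 1; funext x; rw [eval_mul, eval_C]; ring

lemma IPW_sum {w : ℝ → ℝ} (hw : NiceWeight w) {ι : Type*} (s : Finset ι)
    (h : ι → Polynomial ℝ) : IPW w (∑ i ∈ s, h i) = ∑ i ∈ s, IPW w (h i) := by
  unfold IPW
  rw [← integral_finset_sum s (fun i _ => hw.int (h i))]
  congr 1; funext x; rw [eval_finset_sum, Finset.sum_mul]

/-- The ambient space: polynomials of degree `< n-1` with parity `(-1)^n`. -/
noncomputable def Amb (n : ℕ) : Submodule ℝ (Polynomial ℝ) :=
  Polynomial.degreeLT ℝ (n-1) ⊓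
    LinearMap.ker ((Polynomial.aeval (-X : Polynomial ℝ)).toLinearMap
      - ((-1:ℝ)^n) • LinearMap.id)

lemma mem_Amb {n : ℕ} {f : Polynomial ℝ} :
    f ∈ Amb n ↔ f.degree < ((n-1 : ℕ) : WithBot ℕ) ∧ f.comp (-X) = C ((-1:ℝ)^n) * f := by
  rw [Amb, Submodule.mem_inf, Polynomial.mem_degreeLT, LinearMap.mem_ker]
  have key : (((Polynomial.aeval (-X : Polynomial ℝ)).toLinearMap
      - ((-1:ℝ)^n) • LinearMap.id : Polynomial ℝ →ₗ[ℝ] Polynomial ℝ)) f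
      = f.comp (-X) - C ((-1:ℝ)^n) * f := by
    simp only [LinearMap.sub_apply, AlgHom.toLinearMap_apply, LinearMap.smul_apply,
      LinearMap.id_apply, ← comp_eq_aeval, Polynomial.smul_eq_C_mul]
  rw [key, sub_eq_zero]

lemma coeff_comp_neg_X (p : Polynomial ℝ) (i : ℕ) :
    (p.comp (-X)).coeff i = (-1)^i * p.coeff i := by
  induction p using Polynomial.induction_on' with
  | add p q hp hq => simp only [add_comp, coeff_add, hp, hq]; ring
  | monomial k a =>
    rw [monomial_comp]
    have h1 : (-X : Polynomial ℝ)^k = C ((-1:ℝ)^k) * X^k := by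
      rw [neg_pow, ← C_1, ← C_neg, ← C_pow]
    rw [h1, ← mul_assoc, ← C_mul, coeff_C_mul, coeff_X_pow, coeff_monomial]
    by_cases h : k = i
    · subst h; simp [mul_comm]
    · rw [if_neg (by omega), if_neg h]; ring

lemma card_filter_mod (N r : ℕ) (hr : r < 2) :
    ((Finset.range N).filter (fun i => i % 2 = r)).card = (N + 1 - r) / 2 := by
  induction N with
  | zero => simp; omega
  | succ N ih =>
    rw [Finset.range_add_one, Finset.filter_insert]
    by_cases h : N % 2 = r
    · rw [if_pos h, Finset.card_insert_of_notMem (by simp)]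
      omega
    · rw [if_neg h]
      omega

lemma finrank_le_half {n : ℕ} (hn : 2 ≤ n) (W : Submodule ℝ (Polynomial ℝ))
    (hW : W ≤ Amb n) : Module.finrank ℝ ↥W ≤ n / 2 := by
  classical
  set S := (Finset.range (n-1)).filter (fun i => i % 2 = n % 2) with hS
  set Φ : ↥W →ₗ[ℝ] (↥S → ℝ) :=
    LinearMap.pi (fun s => (Polynomial.lcoeff ℝ (s : ℕ)).comp W.subtype) with hΦ
  have hinj : Function.Injective Φ := by
    rw [injective_iff_map_eq_zero]
    intro f hf0
    apply Subtype.ext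
    apply Polynomial.ext
    intro i
    simp only [ZeroMemClass.coe_zero, coeff_zero]
    obtain ⟨hdeg, hpar⟩ := mem_Amb.mp (hW f.2)
    by_cases hi : n - 1 ≤ i
    · exact coeff_eq_zero_of_degree_lt (lt_of_lt_of_le hdeg (by exact_mod_cast hi))
    · push_neg at hi
      by_cases hpar2 : i % 2 = n % 2
      · have his : i ∈ S := by
          rw [hS, Finset.mem_filter, Finset.mem_range]
          exact ⟨hi, hpar2⟩
        have := congrFun hf0 ⟨i, his⟩
        simpa [hΦ] using this
      · have h1 : ((-1:ℝ)^i) * (f : Polynomial ℝ).coeff i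
            = ((-1:ℝ)^n) * (f : Polynomial ℝ).coeff i := by
          have h0 := congrArg (fun q : Polynomial ℝ => q.coeff i) hpar
          rwa [coeff_comp_neg_X, coeff_C_mul] at h0
        have h2 : ((-1:ℝ)^i) = -((-1:ℝ)^n) := by
          rcases Nat.even_or_odd i with hei | hoi
          · have : ¬ Even n := by
              rw [Nat.even_iff] at *
              omega
            rw [hei.neg_one_pow, (Nat.odd_iff.mpr (by rw [Nat.even_iff] at this; omega)).neg_one_pow]
            norm_num
          · have hne : Even n := by
              rw [Nat.even_iff]
              rw [Nat.odd_iff] at hoi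
              omega
            rw [hoi.neg_one_pow, hne.neg_one_pow]
    
        have h3 : ((-1:ℝ)^n) * (2 * (f : Polynomial ℝ).coeff i) = 0 := by
          rw [h2] at h1
          linarith
        have h4 : ((-1:ℝ)^n) ≠ 0 := pow_ne_zero _ (by norm_num)
        have := mul_eq_zero.mp h3
        rcases this with h | h
        · exact absurd h h4
        · linarith
  refine le_trans (LinearMap.finrank_le_finrank_of_injective hinj) ?_
  rw [Module.finrank_pi, Fintype.card_coe, hS, card_filter_mod _ _ (Nat.mod_lt _ (by norm_num))]
  omega

lemma spectral_span {w : ℝ → ℝ} (hw : NiceWeight w) {n : ℕ} {p : Polynomial ℝ}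
    (hp : p.Monic) (hd : p.natDegree = n)
    (horthp : ∀ h : Polynomial ℝ, h.natDegree < n → ∫ x : ℝ, p.eval x * h.eval x * w x = 0)
    (B : Finset ℝ) (hBroot : ∀ r ∈ B, p.IsRoot r) (hBpos : ∀ r ∈ B, 0 < r) :
    ∃ V : Submodule ℝ (Polynomial ℝ), V ≤ Amb n ∧ FiniteDimensional ℝ ↥V ∧
      Module.finrank ℝ ↥V = B.card ∧
      ∀ f ∈ V, ∀ z : ℝ, 0 ≤ z →
        ((∀ r ∈ B, z ≤ r) → z^2 * ∫ x : ℝ, f.eval x * f.eval x * w x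
            ≤ ∫ x : ℝ, (x^2 * f.eval x) * f.eval x * w x) ∧
        ((∀ r ∈ B, r ≤ z) → (∫ x : ℝ, (x^2 * f.eval x) * f.eval x * w x)
            ≤ z^2 * ∫ x : ℝ, f.eval x * f.eval x * w x) := by
  classical
  -- the reflected roots are also roots
  have hsym : ∀ r ∈ B, p.IsRoot (-r) := by
    intro r hr
    have hcomp := parity_self hw hp hd horthp
    have : p.eval (-r) = ((-1:ℝ)^n) * p.eval r := by
      have := congrArg (eval r) hcomp
      rwa [eval_comp, eval_neg, eval_X, eval_mul, eval_C] at this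
    rw [IsRoot, this, hBroot r hr, mul_zero]
  set d : ℝ → Polynomial ℝ := fun r => (X - C r) * (X + C r) with hdd
  have hdmonic : ∀ r : ℝ, (d r).Monic := by
    intro r
    apply (monic_X_sub_C r).mul
    have : X + C r = X - C (-r) := by rw [map_neg, sub_neg_eq_add]
    rw [this]
    exact monic_X_sub_C _
  have hddeg : ∀ r : ℝ, (d r).natDegree = 2 := by
    intro r
    have e1 : X + C r = X - C (-r) := by rw [map_neg, sub_neg_eq_add]
    show ((X - C r) * (X + C r)).natDegree = 2
    rw [e1, natDegree_mul (X_sub_C_ne_zero r) (X_sub_C_ne_zero (-r)),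
      natDegree_X_sub_C, natDegree_X_sub_C]
  have hdvd : ∀ r ∈ B, d r ∣ p := by
    intro r hr
    rw [hdd]
    have h1 : (X - C r) ∣ p := dvd_iff_isRoot.mpr (hBroot r hr)
    have h2 : (X + C r) ∣ p := by
      have : X + C r = X - C (-r) := by rw [map_neg, sub_neg_eq_add]
      rw [this]
      exact dvd_iff_isRoot.mpr (hsym r hr)
    have hco : IsCoprime (X - C r) (X + C r) := by
      have : X + C r = X - C (-r) := by rw [map_neg, sub_neg_eq_add]
      rw [this]
      apply isCoprime_X_sub_C_of_isUnit_sub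
      rw [sub_neg_eq_add, isUnit_iff_ne_zero]
      have := hBpos r hr
      intro h
      nlinarith [hBpos r hr]
    exact hco.mul_dvd h1 h2
  set a : ℝ → Polynomial ℝ := fun r => p /ₘ (d r) with ha
  have hfact : ∀ r ∈ B, p = d r * a r := by
    intro r hr
    have h0 := (modByMonic_eq_zero_iff_dvd (hdmonic r)).mpr (hdvd r hr)
    have h1 := modByMonic_add_div p (q := d r)
    rw [h0, zero_add] at h1
    exact h1.symm
  have hane : ∀ r ∈ B, a r ≠ 0 := by
    intro r hr h0
    have := hfact r hr
    rw [h0, mul_zero] at this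
    exact hp.ne_zero this
  have hadeg : ∀ r ∈ B, (a r).natDegree = n - 2 ∧ 2 ≤ n := by
    intro r hr
    have h1 : p.natDegree = (d r).natDegree + (a r).natDegree := by
      conv_lhs => rw [hfact r hr]
      exact natDegree_mul (hdmonic r).ne_zero (hane r hr)
    rw [hd, hddeg r] at h1
    omega
  -- orthogonality in IPW form
  have horth' : ∀ h : Polynomial ℝ, h.natDegree < n → IPW w (p * h) = 0 := by
    intro h hh
    unfold IPW
    rw [← horthp h hh]
    congr 1; funext x; rw [eval_mul]
  -- cross terms
  have hcross : ∀ r ∈ B, ∀ s ∈ B, r ≠ s →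
      IPW w (a r * a s) = 0 ∧ IPW w (X^2 * (a r * a s)) = 0 := by
    intro r hr s hs hrs
    have hdds : d r * d s ∣ p := by
      have hco : IsCoprime (d r) (d s) := by
        have hrpos := hBpos r hr
        have hspos := hBpos s hs
        have l1 : IsCoprime (X - C r) (X - C s) :=
          isCoprime_X_sub_C_of_isUnit_sub (isUnit_iff_ne_zero.mpr (sub_ne_zero.mpr hrs))
        have l2 : IsCoprime (X - C r) (X - C (-s)) :=
          isCoprime_X_sub_C_of_isUnit_sub (isUnit_iff_ne_zero.mpr (by
            intro h; nlinarith [sub_eq_zero.mp h]))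
        have l3 : IsCoprime (X - C (-r)) (X - C s) :=
          isCoprime_X_sub_C_of_isUnit_sub (isUnit_iff_ne_zero.mpr (by
            intro h; nlinarith [sub_eq_zero.mp h]))
        have l4 : IsCoprime (X - C (-r)) (X - C (-s)) :=
          isCoprime_X_sub_C_of_isUnit_sub (isUnit_iff_ne_zero.mpr (by
            intro h
            exact hrs (neg_injective (sub_eq_zero.mp h))))
        have e1 : X + C r = X - C (-r) := by rw [map_neg, sub_neg_eq_add]
        have e2 : X + C s = X - C (-s) := by rw [map_neg, sub_neg_eq_add]
        rw [hdd]
        simp only []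
        rw [e1, e2]
        exact (l1.mul_right l2).mul_left (l3.mul_right l4)
      exact hco.mul_dvd (hdvd r hr) (hdvd s hs)
    obtain ⟨e, he⟩ := hdds
    have haa : a r * a s = p * e := by
      have h1 : d r * a r = d r * (d s * e) := by
        rw [← hfact r hr, he]; ring
      have h2 : a r = d s * e := mul_left_cancel₀ (hdmonic r).ne_zero h1
      have h3 : d s * a s = d s * (d r * e) := by
        rw [← hfact s hs, he]; ring
      have h4 : a s = d r * e := mul_left_cancel₀ (hdmonic s).ne_zero h3
      rw [h2, h4, he]; ring
    have hene : e ≠ 0 := by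
      intro h0
      rw [h0, mul_zero] at he
      exact hp.ne_zero he
    have hedeg : e.natDegree + 4 = n := by
      have h1 : p.natDegree = (d r * d s).natDegree + e.natDegree :=
        he ▸ natDegree_mul (mul_ne_zero (hdmonic r).ne_zero (hdmonic s).ne_zero) hene
      rw [hd, natDegree_mul (hdmonic r).ne_zero (hdmonic s).ne_zero, hddeg, hddeg] at h1
      omega
    constructor
    · rw [haa]
      exact horth' e (by omega)
    · have : X^2 * (a r * a s) = p * (X^2 * e) := by rw [haa]; ring
      rw [this]
      apply horth'
      rw [natDegree_mul (by exact pow_ne_zero 2 X_ne_zero) hene, natDegree_pow, natDegree_X]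
      omega
  -- diagonal
  have hdiag : ∀ r ∈ B, IPW w (X^2 * (a r * a r)) = r^2 * IPW w (a r * a r) := by
    intro r hr
    have hiden : X^2 * (a r * a r) = C (r^2) * (a r * a r) + p * a r := by
      conv_rhs => rw [hfact r hr]
      have : (C (r^2) : Polynomial ℝ) = C r * C r := by rw [← C_mul]; ring_nf
      rw [this, hdd]
      ring
    rw [hiden, IPW_add hw, IPW_Cmul, horth' (a r) (by
      have := hadeg r hr
      omega), add_zero]
  -- positivity of norms
  have hNpos : ∀ r ∈ B, 0 < IPW w (a r * a r) := by
    intro r hr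
    have := integral_sq_w_pos hw (hane r hr)
    unfold IPW
    convert this using 1
    congr 1; funext x; rw [eval_mul]
  -- parity and degree of a r
  have hamem : ∀ r ∈ B, a r ∈ Amb n := by
    intro r hr
    rw [mem_Amb]
    obtain ⟨hdeg2, hn2⟩ := hadeg r hr
    constructor
    · rw [degree_eq_natDegree (hane r hr), hdeg2]
      exact_mod_cast (by omega : n - 2 < n - 1)
    · have hcomp := parity_self hw hp hd horthp
      have hdcomp : (d r).comp (-X) = d r := by
        rw [hdd]
        simp only [mul_comp, sub_comp, add_comp, X_comp, C_comp]
        ring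
      have h1 : d r * ((a r).comp (-X)) = d r * (C ((-1:ℝ)^n) * a r) := by
        have h2 : (d r * a r).comp (-X) = C ((-1:ℝ)^n) * (d r * a r) := by
          rw [← hfact r hr, hcomp]
        rw [mul_comp, hdcomp] at h2
        rw [h2]; ring
      exact mul_left_cancel₀ (hdmonic r).ne_zero h1
  -- injectivity of a on B
  have hainj : ∀ r ∈ B, ∀ s ∈ B, a r = a s → r = s := by
    intro r hr s hs hras
    have h1 : d r * a r = d s * a r := by
      conv_lhs => rw [← hfact r hr]
      conv_rhs => rw [hras, ← hfact s hs]
    have h2 : d r = d s := mul_right_cancel₀ (hane r hr) h1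
    have h3 := congrArg (eval r) h2
    rw [hdd] at h3
    simp only [eval_mul, eval_sub, eval_add, eval_X, eval_C, sub_self, zero_mul] at h3
    have h4 : (r - s) * (r + s) = 0 := h3.symm
    rcases mul_eq_zero.mp h4 with h | h
    · linarith [sub_eq_zero.mp h]
    · nlinarith [hBpos r hr, hBpos s hs]
  -- the span
  set V : Submodule ℝ (Polynomial ℝ) := Submodule.span ℝ ↑(B.image a) with hV
  have hVfin : FiniteDimensional ℝ ↥V := FiniteDimensional.span_of_finite ℝ (B.image a).finite_toSet
  have hli : LinearIndependent ℝ (fun r : ↥B => a ↑r) := by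
    rw [linearIndependent_iff']
    intro s g hsum i his
    have key : IPW w ((∑ j ∈ s, g j • a ↑j) * a ↑i) = 0 := by
      rw [hsum, zero_mul]
      unfold IPW
      simp
    have expand : IPW w ((∑ j ∈ s, g j • a ↑j) * a ↑i)
        = ∑ j ∈ s, g j * IPW w (a ↑j * a ↑i) := by
      rw [Finset.sum_mul]
      have : ∀ j ∈ s, (g j • a ↑j) * a ↑i = C (g j) * (a ↑j * a ↑i) := by
        intro j _
        rw [Polynomial.smul_eq_C_mul]; ring
      rw [Finset.sum_congr rfl this, IPW_sum hw]
      exact Finset.sum_congr rfl fun j _ => IPW_Cmul _ _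
    rw [expand] at key
    have collapse : ∑ j ∈ s, g j * IPW w (a ↑j * a ↑i) = g i * IPW w (a ↑i * a ↑i) := by
      apply Finset.sum_eq_single_of_mem i his
      intro j hjs hji
      have : IPW w (a ↑j * a ↑i) = 0 := by
        have hji' : (j : ℝ) ≠ (i : ℝ) := fun h => hji (Subtype.ext h)
        exact (hcross ↑j j.2 ↑i i.2 hji').1
      rw [this, mul_zero]
    rw [collapse] at key
    rcases mul_eq_zero.mp key with h | h
    · exact h
    · exact absurd h (hNpos ↑i i.2).ne'
  have hVrank : Module.finrank ℝ ↥V = B.card := by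
    have h1 : (↑(B.image a) : Set (Polynomial ℝ)) = Set.range (fun r : ↥B => a ↑r) := by
      rw [Finset.coe_image]
      exact Set.image_eq_range a ↑B
    rw [hV, h1, finrank_span_eq_card hli, Fintype.card_coe]
  refine ⟨V, ?_, hVfin, hVrank, ?_⟩
  · rw [hV, Submodule.span_le]
    intro y hy
    rw [Finset.coe_image] at hy
    obtain ⟨r, hr, rfl⟩ := hy
    exact hamem r hr
  · intro f hf z hz
    -- expansion of f
    obtain ⟨co, -, hco⟩ := Submodule.mem_span_finset.mp (hV ▸ hf)
    have hfsum : f = ∑ r ∈ B, co (a r) • a r := by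
      rw [← hco, Finset.sum_image (fun x hx y hy hxy => hainj x hx y hy hxy)]
    set c : ℝ → ℝ := fun r => co (a r) with hc
    -- quadratic expansion
    have hff : f * f = ∑ r ∈ B, ∑ s ∈ B, (c r * c s) • (a r * a s) := by
      rw [hfsum, Finset.sum_mul_sum]
      refine Finset.sum_congr rfl fun r _ => Finset.sum_congr rfl fun s _ => ?_
      rw [smul_mul_smul_comm]
    have hJ0 : IPW w (f * f) = ∑ r ∈ B, (c r)^2 * IPW w (a r * a r) := by
      rw [hff, IPW_sum hw]
      refine Finset.sum_congr rfl fun r hr => ?_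
      rw [IPW_sum hw]
      have : ∀ s ∈ B, IPW w ((c r * c s) • (a r * a s))
          = (c r * c s) * IPW w (a r * a s) := by
        intro s _
        rw [Polynomial.smul_eq_C_mul, IPW_Cmul]
      rw [Finset.sum_congr rfl this,
        Finset.sum_eq_single_of_mem r hr (fun s hs hsr => by
          rw [(hcross r hr s hs (fun h => hsr (h.symm ▸ rfl))).1, mul_zero])]
      ring
    have hJ2 : IPW w (X^2 * (f * f)) = ∑ r ∈ B, (c r)^2 * (r^2 * IPW w (a r * a r)) := by
      have hx2 : X^2 * (f * f) = ∑ r ∈ B, ∑ s ∈ B, (c r * c s) • (X^2 * (a r * a s)) := by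
        rw [hff, Finset.mul_sum]
        refine Finset.sum_congr rfl fun r _ => ?_
        rw [Finset.mul_sum]
        refine Finset.sum_congr rfl fun s _ => ?_
        rw [mul_smul_comm]
      rw [hx2, IPW_sum hw]
      refine Finset.sum_congr rfl fun r hr => ?_
      rw [IPW_sum hw]
      have : ∀ s ∈ B, IPW w ((c r * c s) • (X^2 * (a r * a s)))
          = (c r * c s) * IPW w (X^2 * (a r * a s)) := by
        intro s _
        rw [Polynomial.smul_eq_C_mul, IPW_Cmul]
      rw [Finset.sum_congr rfl this,
        Finset.sum_eq_single_of_mem r hr (fun s hs hsr => by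
          rw [(hcross r hr s hs (fun h => hsr (h.symm ▸ rfl))).2, mul_zero]),
        hdiag r hr]
      ring
    -- identify the integrals with IPW
    have hid0 : ∫ x : ℝ, f.eval x * f.eval x * w x = IPW w (f * f) := by
      unfold IPW; congr 1; funext x; rw [eval_mul]
    have hid2 : ∫ x : ℝ, (x^2 * f.eval x) * f.eval x * w x = IPW w (X^2 * (f * f)) := by
      unfold IPW; congr 1; funext x
      simp only [eval_mul, eval_pow, eval_X]
      ring
    rw [hid0, hid2, hJ0, hJ2]
    constructor
    · intro hlow
      rw [Finset.mul_sum]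
      apply Finset.sum_le_sum
      intro r hr
      have h1 : z^2 ≤ r^2 := by
        have := hlow r hr
        nlinarith
      nlinarith [mul_le_mul_of_nonneg_right h1 (mul_nonneg (sq_nonneg (c r)) (hNpos r hr).le)]
    · intro hhigh
      rw [Finset.mul_sum]
      apply Finset.sum_le_sum
      intro r hr
      have h1 : r^2 ≤ z^2 := by
        have := hhigh r hr
        nlinarith [hBpos r hr]
      nlinarith [mul_le_mul_of_nonneg_right h1 (mul_nonneg (sq_nonneg (c r)) (hNpos r hr).le)]


lemma exists_roots_bound {f : Polynomial ℝ} (hf : f ≠ 0) :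
    ∃ M : ℝ, 1 ≤ M ∧ ∀ x : ℝ, M ≤ x → f.eval x ≠ 0 := by
  obtain ⟨M0, hM0⟩ := (f.roots.toFinset.finite_toSet).bddAbove
  refine ⟨max 1 (M0 + 1), le_max_left _ _, fun x hx hroot => ?_⟩
  have : x ∈ f.roots.toFinset := by
    rw [Multiset.mem_toFinset, mem_roots hf]; exact hroot
  have h1 : x ≤ M0 := hM0 (Finset.mem_coe.mpr this)
  have h2 : M0 + 1 ≤ x := le_trans (le_max_right 1 (M0+1)) hx
  linarith

lemma chebyshev_correlation {w₁ w₂ g : ℝ → ℝ} (hw₁ : NiceWeight w₁) (hw₂ : NiceWeight w₂)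
    (hg : ∀ x : ℝ, x ≠ 0 → w₂ x = g x * w₁ x)
    (hge : ∀ x : ℝ, g (-x) = g x)
    (hgm : ∀ x y : ℝ, x^2 < y^2 → g x < g y)
    {f : Polynomial ℝ} (hf : f ≠ 0) :
    (∫ x : ℝ, (x^2 * f.eval x) * f.eval x * w₁ x) * (∫ x : ℝ, f.eval x * f.eval x * w₂ x)
      < (∫ x : ℝ, (x^2 * f.eval x) * f.eval x * w₂ x) * (∫ x : ℝ, f.eval x * f.eval x * w₁ x) := by
  classical
  set u0 : ℝ → ℝ := fun x => (f*f).eval x * w₁ x with hu0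
  set u2 : ℝ → ℝ := fun x => (X^2*(f*f)).eval x * w₁ x with hu2
  set v0 : ℝ → ℝ := fun x => (f*f).eval x * w₂ x with hv0
  set v2 : ℝ → ℝ := fun x => (X^2*(f*f)).eval x * w₂ x with hv2
  have iu0 : Integrable u0 := hw₁.int _
  have iu2 : Integrable u2 := hw₁.int _
  have iv0 : Integrable v0 := hw₂.int _
  have iv2 : Integrable v2 := hw₂.int _
  set H : ℝ × ℝ → ℝ := fun z =>
    (z.1^2 - z.2^2) * (g z.1 - g z.2) * ((f.eval z.1)^2 * w₁ z.1) * ((f.eval z.2)^2 * w₁ z.2)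
    with hH
  set H' : ℝ × ℝ → ℝ := fun z =>
    v2 z.1 * u0 z.2 - u2 z.1 * v0 z.2 - v0 z.1 * u2 z.2 + u0 z.1 * v2 z.2 with hH'
  -- a.e. equality
  have haeq : H' =ᵐ[(volume : Measure ℝ).prod (volume : Measure ℝ)] H := by
    have hsub : {z : ℝ × ℝ | ¬ H' z = H z} ⊆
        (({0} : Set ℝ) ×ˢ (univ : Set ℝ)) ∪ ((univ : Set ℝ) ×ˢ ({0} : Set ℝ)) := by
      intro z hz
      by_contra hmem
      simp only [Set.mem_union, Set.mem_prod, Set.mem_singleton_iff, Set.mem_univ,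
        and_true, true_and, not_or] at hmem
      apply hz
      have h1 : z.1 ≠ 0 := hmem.1
      have h2 : z.2 ≠ 0 := hmem.2
      simp only [hH, hH', hu0, hu2, hv0, hv2, eval_mul, eval_pow, eval_X,
        hg z.1 h1, hg z.2 h2]
      ring
    have hnull : ((volume : Measure ℝ).prod volume)
        ((({0} : Set ℝ) ×ˢ (univ : Set ℝ)) ∪ ((univ : Set ℝ) ×ˢ ({0} : Set ℝ))) = 0 := by
      apply measure_union_null
      · rw [Measure.prod_prod, Real.volume_singleton, zero_mul]
      · rw [Measure.prod_prod, Real.volume_singleton, mul_zero]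
    rw [Filter.EventuallyEq, ae_iff]
    exact measure_mono_null hsub hnull
  have iH' : Integrable H' ((volume : Measure ℝ).prod volume) :=
    (((iv2.mul_prod iu0).sub (iu2.mul_prod iv0)).sub (iv0.mul_prod iu2)).add
      (iu0.mul_prod iv2)
  have iH : Integrable H ((volume : Measure ℝ).prod volume) := iH'.congr haeq
  -- pointwise nonnegativity
  have hHnn : ∀ z : ℝ × ℝ, 0 ≤ H z := by
    rintro ⟨x, y⟩
    have key : 0 ≤ (x^2 - y^2) * (g x - g y) := by
      rcases lt_trichotomy (x^2) (y^2) with h | h | h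
      · have := hgm x y h
        nlinarith
      · have : g x = g y := by
          have h2 : y = x ∨ y = -x := by
            have : (y - x) * (y + x) = 0 := by nlinarith
            rcases mul_eq_zero.mp this with h3 | h3
            · left; linarith
            · right; linarith
          rcases h2 with rfl | rfl
          · rfl
          · rw [hge x]
        rw [this]
        simp [h]
      · have := hgm y x h
        nlinarith
    have : H (x, y) = ((x^2 - y^2) * (g x - g y)) * (((f.eval x)^2 * w₁ x) * ((f.eval y)^2 * w₁ y)) := by
      rw [hH]; ring
    rw [this]
    apply mul_nonneg key
    apply mul_nonneg <;> exact mul_nonneg (sq_nonneg _) (hw₁.nonneg _)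
  -- strict positivity of the double integral
  obtain ⟨M, hM1, hMroot⟩ := exists_roots_bound hf
  have hpos : 0 < ∫ z : ℝ × ℝ, H z ∂((volume : Measure ℝ).prod volume) := by
    rw [integral_pos_iff_support_of_nonneg_ae (Filter.Eventually.of_forall hHnn) iH]
    have hboxsub : (Ioo M (M+1)) ×ˢ (Ioo (M+1) (M+2)) ⊆ Function.support H := by
      rintro ⟨x, y⟩ ⟨hx, hy⟩
      simp only [Set.mem_Ioo] at hx hy
      have hx0 : (0:ℝ) < x := by linarith
      have hy0 : (0:ℝ) < y := by linarith
      have hfx : f.eval x ≠ 0 := hMroot x hx.1.le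
      have hfy : f.eval y ≠ 0 := hMroot y (by linarith)
      have hxy : x^2 < y^2 := by nlinarith
      have hgg := hgm x y hxy
      have hA : 0 < (f.eval x)^2 * w₁ x :=
        mul_pos (lt_of_le_of_ne (sq_nonneg _) (Ne.symm (pow_ne_zero 2 hfx)))
          (hw₁.pos x hx0.ne')
      have hB : 0 < (f.eval y)^2 * w₁ y :=
        mul_pos (lt_of_le_of_ne (sq_nonneg _) (Ne.symm (pow_ne_zero 2 hfy)))
          (hw₁.pos y hy0.ne')
      have h1 : 0 < (x^2 - y^2) * (g x - g y) := by nlinarith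
      have : 0 < H (x, y) := by
        rw [hH]
        exact mul_pos (mul_pos h1 hA) hB
      exact this.ne'
    have hbox : 0 < ((volume : Measure ℝ).prod volume)
        ((Ioo M (M+1)) ×ˢ (Ioo (M+1) (M+2))) := by
      rw [Measure.prod_prod, Real.volume_Ioo, Real.volume_Ioo]
      have : M + 1 - M = (1:ℝ) := by ring
      rw [this]
      have : M + 2 - (M+1) = (1:ℝ) := by ring
      rw [this]
      norm_num
    exact lt_of_lt_of_le hbox (measure_mono hboxsub)
  -- compute the double integral
  have hval : ∫ z : ℝ × ℝ, H z ∂((volume : Measure ℝ).prod volume)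
      = (∫ x : ℝ, v2 x) * (∫ x : ℝ, u0 x) - (∫ x : ℝ, u2 x) * (∫ x : ℝ, v0 x)
        - (∫ x : ℝ, v0 x) * (∫ x : ℝ, u2 x) + (∫ x : ℝ, u0 x) * (∫ x : ℝ, v2 x) := by
    have i1 : Integrable (fun z : ℝ × ℝ => v2 z.1 * u0 z.2) ((volume : Measure ℝ).prod volume) :=
      iv2.mul_prod iu0
    have i2 : Integrable (fun z : ℝ × ℝ => u2 z.1 * v0 z.2) ((volume : Measure ℝ).prod volume) :=
      iu2.mul_prod iv0
    have i3 : Integrable (fun z : ℝ × ℝ => v0 z.1 * u2 z.2) ((volume : Measure ℝ).prod volume) :=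
      iv0.mul_prod iu2
    have i4 : Integrable (fun z : ℝ × ℝ => u0 z.1 * v2 z.2) ((volume : Measure ℝ).prod volume) :=
      iu0.mul_prod iv2
    have i12 : Integrable (fun z : ℝ × ℝ => v2 z.1 * u0 z.2 - u2 z.1 * v0 z.2)
        ((volume : Measure ℝ).prod volume) := i1.sub i2
    have i123 : Integrable (fun z : ℝ × ℝ => v2 z.1 * u0 z.2 - u2 z.1 * v0 z.2 - v0 z.1 * u2 z.2)
        ((volume : Measure ℝ).prod volume) := i12.sub i3
    rw [integral_congr_ae haeq.symm, hH']
    rw [integral_add i123 i4, integral_sub i12 i3, integral_sub i1 i2,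
      integral_prod_mul, integral_prod_mul, integral_prod_mul, integral_prod_mul]
  -- identify goal integrals
  have gu0 : ∫ x : ℝ, f.eval x * f.eval x * w₁ x = ∫ x : ℝ, u0 x := by
    congr 1; funext x; rw [hu0]; simp only [eval_mul]
  have gv0 : ∫ x : ℝ, f.eval x * f.eval x * w₂ x = ∫ x : ℝ, v0 x := by
    congr 1; funext x; rw [hv0]; simp only [eval_mul]
  have gu2 : ∫ x : ℝ, (x^2 * f.eval x) * f.eval x * w₁ x = ∫ x : ℝ, u2 x := by
    congr 1; funext x; rw [hu2]; simp only [eval_mul, eval_pow, eval_X]; ring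
  have gv2 : ∫ x : ℝ, (x^2 * f.eval x) * f.eval x * w₂ x = ∫ x : ℝ, v2 x := by
    congr 1; funext x; rw [hv2]; simp only [eval_mul, eval_pow, eval_X]; ring
  rw [gu0, gv0, gu2, gv2]
  rw [hval] at hpos
  nlinarith [hpos]


lemma comparison {n ν : ℕ} (hν1 : 1 ≤ ν) (hνk : ν ≤ n / 2)
    {w₁ w₂ g : ℝ → ℝ} (hw₁ : NiceWeight w₁) (hw₂ : NiceWeight w₂)
    (hg : ∀ x : ℝ, x ≠ 0 → w₂ x = g x * w₁ x) (hge : ∀ x, g (-x) = g x)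
    (hgm : ∀ x y : ℝ, x^2 < y^2 → g x < g y)
    {p q : Polynomial ℝ} (hpm : p.Monic) (hpd : p.natDegree = n) (hqm : q.Monic)
    (hqd : q.natDegree = n)
    (hop : ∀ h : Polynomial ℝ, h.natDegree < n → ∫ x : ℝ, p.eval x * h.eval x * w₁ x = 0)
    (hoq : ∀ h : Polynomial ℝ, h.natDegree < n → ∫ x : ℝ, q.eval x * h.eval x * w₂ x = 0)
    {z₁ z₂ : ℝ} (h₁ : IsNthLargestPosZero p ν z₁) (h₂ : IsNthLargestPosZero q ν z₂) :
    z₁ < z₂ := by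
  classical
  have hn2 : 2 ≤ n := by omega
  obtain ⟨hz₁pos, hz₁root, hz₁count⟩ := h₁
  obtain ⟨hz₂pos, hz₂root, hz₂count⟩ := h₂
  obtain ⟨hcardq, hsymq, hposq⟩ := root_structure hw₂ hqm hqd hoq
  -- B₁
  set B₁ : Finset ℝ := insert z₁ ((p.roots.toFinset).filter (fun y => z₁ < y)) with hB₁
  have hB₁card : B₁.card = ν := by
    rw [hB₁, Finset.card_insert_of_notMem (by simp), hz₁count]
    omega
  have hB₁root : ∀ r ∈ B₁, p.IsRoot r := by
    intro r hr
    rw [hB₁, Finset.mem_insert] at hr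
    rcases hr with rfl | hr
    · exact hz₁root
    · rw [Finset.mem_filter, Multiset.mem_toFinset, mem_roots hpm.ne_zero] at hr
      exact hr.1
  have hB₁pos : ∀ r ∈ B₁, 0 < r := by
    intro r hr
    rw [hB₁, Finset.mem_insert] at hr
    rcases hr with rfl | hr
    · exact hz₁pos
    · rw [Finset.mem_filter] at hr
      linarith [hr.2]
  have hB₁ge : ∀ r ∈ B₁, z₁ ≤ r := by
    intro r hr
    rw [hB₁, Finset.mem_insert] at hr
    rcases hr with rfl | hr
    · exact le_rfl
    · rw [Finset.mem_filter] at hr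
      exact hr.2.le
  -- B₂
  set Dq := q.roots.toFinset with hDq
  set B₂ : Finset ℝ := (Dq.filter (fun r => 0 < r)).filter (fun r => ¬ z₂ < r) with hB₂
  have hsplit : ((Dq.filter (fun r => 0 < r)).filter (fun r => z₂ < r)).card + B₂.card
      = (Dq.filter (fun r => 0 < r)).card := by
    rw [hB₂]
    exact Finset.card_filter_add_card_filter_not _
  have hfilter_eq : (Dq.filter (fun r => 0 < r)).filter (fun r => z₂ < r)
      = Dq.filter (fun y => z₂ < y) := by
    ext r
    simp only [Finset.mem_filter]
    constructor
    · rintro ⟨⟨h1, h2⟩, h3⟩; exact ⟨h1, h3⟩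
    · rintro ⟨h1, h2⟩; exact ⟨⟨h1, by linarith⟩, h2⟩
  have hB₂card : B₂.card = n / 2 - (ν - 1) := by
    rw [hfilter_eq, hz₂count, hposq] at hsplit
    omega
  have hB₂root : ∀ r ∈ B₂, q.IsRoot r := by
    intro r hr
    rw [hB₂] at hr
    simp only [Finset.mem_filter, hDq, Multiset.mem_toFinset, mem_roots hqm.ne_zero] at hr
    exact hr.1.1
  have hB₂pos : ∀ r ∈ B₂, 0 < r := by
    intro r hr
    rw [hB₂] at hr
    simp only [Finset.mem_filter] at hr
    exact hr.1.2
  have hB₂le : ∀ r ∈ B₂, r ≤ z₂ := by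
    intro r hr
    rw [hB₂] at hr
    simp only [Finset.mem_filter] at hr
    exact not_lt.mp hr.2
  -- spectral spans
  obtain ⟨V₁, hV₁le, hV₁fin, hV₁rank, hV₁spec⟩ :=
    spectral_span hw₁ hpm hpd hop B₁ hB₁root hB₁pos
  obtain ⟨V₂, hV₂le, hV₂fin, hV₂rank, hV₂spec⟩ :=
    spectral_span hw₂ hqm hqd hoq B₂ hB₂root hB₂pos
  haveI := hV₁fin
  haveI := hV₂fin
  -- intersection nontrivial
  have hsup_le : V₁ ⊔ V₂ ≤ Amb n := sup_le hV₁le hV₂le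
  have hsup_rank : Module.finrank ℝ ↥(V₁ ⊔ V₂) ≤ n / 2 := finrank_le_half hn2 _ hsup_le
  have hinf_ne : V₁ ⊓ V₂ ≠ ⊥ := by
    intro hbot
    have := Submodule.finrank_sup_add_finrank_inf_eq V₁ V₂
    rw [hbot, finrank_bot, add_zero, hV₁rank, hV₂rank, hB₁card, hB₂card] at this
    omega
  obtain ⟨f, hfmem, hfne⟩ := Submodule.exists_mem_ne_zero_of_ne_bot hinf_ne
  rw [Submodule.mem_inf] at hfmem
  -- the inequalities
  have hJ0₁ : 0 < ∫ x : ℝ, f.eval x * f.eval x * w₁ x := integral_sq_w_pos hw₁ hfne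
  have hJ0₂ : 0 < ∫ x : ℝ, f.eval x * f.eval x * w₂ x := integral_sq_w_pos hw₂ hfne
  have hlow := (hV₁spec f hfmem.1 z₁ hz₁pos.le).1 hB₁ge
  have hhigh := (hV₂spec f hfmem.2 z₂ hz₂pos.le).2 hB₂le
  have hcheb := chebyshev_correlation hw₁ hw₂ hg hge hgm hfne
  -- chain
  have hA : 0 < (∫ x : ℝ, f.eval x * f.eval x * w₁ x) * (∫ x : ℝ, f.eval x * f.eval x * w₂ x) :=
    mul_pos hJ0₁ hJ0₂
  have key : z₁^2 * ((∫ x : ℝ, f.eval x * f.eval x * w₁ x) * (∫ x : ℝ, f.eval x * f.eval x * w₂ x))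
      < z₂^2 * ((∫ x : ℝ, f.eval x * f.eval x * w₁ x) * (∫ x : ℝ, f.eval x * f.eval x * w₂ x)) := by
    nlinarith [mul_le_mul_of_nonneg_right hlow hJ0₂.le,
      mul_le_mul_of_nonneg_right hhigh hJ0₁.le, hcheb]
  have hz12 : z₁^2 < z₂^2 := by
    by_contra hcon
    push_neg at hcon
    have := mul_le_mul_of_nonneg_right hcon hA.le
    nlinarith [key]
  nlinarith [hz₁pos, hz₂pos, hz12]


/-- For integer `m ≥ 2` and `n ≥ 1`, each positive zero `x_{ν,n}(t,λ)`
(`1 ≤ ν ≤ ⌊n/2⌋`) of the monic polynomial orthogonal with respect to the generalised higher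
order Freud weight is strictly increasing in `λ` (for `λ > −1`, `t` fixed) and strictly
increasing in `t` (for `t ∈ ℝ`, `λ > −1` fixed). -/
theorem zeros_monotonicity (m : ℕ) (hm : 2 ≤ m)
    (P : ℝ → ℝ → ℕ → Polynomial ℝ)
    (hmonic : ∀ (t lam : ℝ), -1 < lam → ∀ n, (P t lam n).Monic)
    (hdeg : ∀ (t lam : ℝ), -1 < lam → ∀ n, (P t lam n).natDegree = n)
    (horth : ∀ (t lam : ℝ), -1 < lam → ∀ j k, j ≠ k →
      ∫ x : ℝ, (P t lam j).eval x * (P t lam k).eval x * freudWeight m lam t x = 0) :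
    ∀ n : ℕ, 1 ≤ n → ∀ ν : ℕ, 1 ≤ ν → ν ≤ n / 2 →
      (∀ (t lam₁ lam₂ z₁ z₂ : ℝ), -1 < lam₁ → lam₁ < lam₂ →
        IsNthLargestPosZero (P t lam₁ n) ν z₁ → IsNthLargestPosZero (P t lam₂ n) ν z₂ →
        z₁ < z₂) ∧
      (∀ (lam t₁ t₂ z₁ z₂ : ℝ), -1 < lam → t₁ < t₂ →
        IsNthLargestPosZero (P t₁ lam n) ν z₁ → IsNthLargestPosZero (P t₂ lam n) ν z₂ →
        z₁ < z₂) := by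
  intro n hn ν hν1 hνk
  constructor
  · intro t lam₁ lam₂ z₁ z₂ hlam₁ hlam₁₂ h₁ h₂
    have hlam₂ : -1 < lam₂ := lt_trans hlam₁ hlam₁₂
    have hw₁ := niceWeight_freud hlam₁ t hm
    have hw₂ := niceWeight_freud hlam₂ t hm
    set g : ℝ → ℝ := fun x => (x^2) ^ (lam₂ - lam₁) with hgdef
    have hΔ : 0 < lam₂ - lam₁ := by linarith
    have hg : ∀ x : ℝ, x ≠ 0 → freudWeight m lam₂ t x = g x * freudWeight m lam₁ t x := by
      intro x hx
      unfold freudWeight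
      have habs : (0:ℝ) < |x| := abs_pos.mpr hx
      have h1 : g x = |x| ^ (2 * (lam₂ - lam₁)) := by
        rw [hgdef]
        simp only []
        rw [← sq_abs, ← Real.rpow_natCast |x| 2, ← Real.rpow_mul (abs_nonneg x)]
        norm_num
      rw [h1, ← mul_assoc, ← Real.rpow_add habs]
      congr 2
      ring
    have hge : ∀ x : ℝ, g (-x) = g x := by
      intro x
      rw [hgdef]
      simp only [Even.neg_pow even_two]
    have hgm : ∀ x y : ℝ, x^2 < y^2 → g x < g y := by
      intro x y hxy
      exact Real.rpow_lt_rpow (sq_nonneg x) hxy hΔ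
    exact comparison hν1 hνk hw₁ hw₂ hg hge hgm
      (hmonic t lam₁ hlam₁ n) (hdeg t lam₁ hlam₁ n)
      (hmonic t lam₂ hlam₂ n) (hdeg t lam₂ hlam₂ n)
      (orth_all hw₁ (hmonic t lam₁ hlam₁) (hdeg t lam₁ hlam₁) (horth t lam₁ hlam₁))
      (orth_all hw₂ (hmonic t lam₂ hlam₂) (hdeg t lam₂ hlam₂) (horth t lam₂ hlam₂))
      h₁ h₂
  · intro lam t₁ t₂ z₁ z₂ hlam ht₁₂ h₁ h₂
    have hw₁ := niceWeight_freud hlam t₁ hm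
    have hw₂ := niceWeight_freud hlam t₂ hm
    set g : ℝ → ℝ := fun x => Real.exp ((t₂ - t₁) * x^2) with hgdef
    have hΔ : 0 < t₂ - t₁ := by linarith
    have hg : ∀ x : ℝ, x ≠ 0 → freudWeight m lam t₂ x = g x * freudWeight m lam t₁ x := by
      intro x _
      unfold freudWeight
      rw [hgdef]
      simp only []
      have : t₂ * x^2 - x^(2*m) = (t₂ - t₁) * x^2 + (t₁ * x^2 - x^(2*m)) := by ring
      rw [this, Real.exp_add]
      ring
    have hge : ∀ x : ℝ, g (-x) = g x := by
      intro x
      rw [hgdef]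
      simp only [Even.neg_pow even_two]
    have hgm : ∀ x y : ℝ, x^2 < y^2 → g x < g y := by
      intro x y hxy
      rw [hgdef]
      simp only []
      exact Real.exp_lt_exp.mpr (by nlinarith)
    exact comparison hν1 hνk hw₁ hw₂ hg hge hgm
      (hmonic t₁ lam hlam n) (hdeg t₁ lam hlam n)
      (hmonic t₂ lam hlam n) (hdeg t₂ lam hlam n)
      (orth_all hw₁ (hmonic t₁ lam hlam) (hdeg t₁ lam hlam) (horth t₁ lam hlam))
      (orth_all hw₂ (hmonic t₂ lam hlam) (hdeg t₂ lam hlam) (horth t₂ lam hlam))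
      h₁ h₂
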